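/- Let p be a prime and let K be a field with a nontrivial nonarchimedean multiplicative norm ‖·‖ : K → ℝ≥0. Let K° = {x ∈ K : ‖x‖ ≤ 1} and 𝔪 = {x ∈ K : ‖x‖ < 1}. Assume K is spherically complete (every chain of closed balls in K has nonempty intersection) and that there is a sequence (π_n)_{n≥0} in K° with 0 < ‖π_0‖ < 1, π_{n+1}^p = π_n for all n, and 𝔪 = ⋃_n π_n K°. Then Ext¹_{K°}(𝔪, 𝔪) = 0, i.e. the first Ext group of the K°-module 𝔪 with itself vanishes (equivalently, every short exact sequence of K°-modules 0 → 𝔪 → E → 𝔪 → 0 splits). -/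

import Mathlib

set_option maxHeartbeats 1000000
set_option synthInstance.maxHeartbeats 400000


/-- The maximal ideal `𝔪 = {x ∈ K : ‖x‖ < 1}` of the valuation ring
`K° = {x ∈ K : ‖x‖ ≤ 1}`, regarded as a `K°`-submodule of `K`. -/
def maxIdealSubmodule {K : Type*} [Field K] (v : Valuation K NNReal) :
    Submodule v.integer K where
  carrier := {x : K | v x < 1}
  add_mem' := fun {a b} ha hb => lt_of_le_of_lt (v.map_add a b) (max_lt ha hb)
  zero_mem' := by simp
  smul_mem' := fun c x hx => by
    have hc : v (c : K) ≤ 1 := c.2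
    have : v ((c : K) * x) < 1 := by
      calc v ((c : K) * x) = v (c : K) * v x := v.map_mul _ _
        _ ≤ 1 * v x := mul_le_mul_of_nonneg_right hc zero_le
        _ = v x := one_mul _
        _ < 1 := hx
    simpa [Subring.smul_def] using this

/-- `K` is spherically complete: every family of closed balls that is totally ordered by
inclusion has nonempty intersection. -/
def SphericallyComplete {K : Type*} [Field K] (v : Valuation K NNReal) : Prop :=
  ∀ 𝒞 : Set (Set K), (∀ B ∈ 𝒞, ∃ (c : K) (r : NNReal), B = {x : K | v (x - c) ≤ r}) →
    IsChain (· ⊆ ·) 𝒞 → (⋂₀ 𝒞).Nonempty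

private lemma aux_div_split {K : Type*} [Field K] (a T t m : K) (ht : t ≠ 0) (hT : T ≠ 0) :
    (a + T * m) / T = m + t * (a / (T * t)) := by
  field_simp
  ring

/-- Let `p` be a prime and `K` a spherically complete field with a nontrivial
nonarchimedean multiplicative norm, with a compatible `p`-power root system of
pseudo-uniformizers generating `𝔪`.  Then `Ext¹_{K°}(𝔪, 𝔪) = 0`: every short exact
sequence of `K°`-modules `0 → 𝔪 → E → 𝔪 → 0` splits. -/
theorem ext_maxIdeal_maxIdeal_eq_zero (p : ℕ) (hp : p.Prime) (K : Type*) [Field K]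
    (v : Valuation K NNReal) (hnt : ∃ x : K, x ≠ 0 ∧ v x ≠ 1)
    (hsc : SphericallyComplete v)
    (π : ℕ → K) (hπint : ∀ n, v (π n) ≤ 1)
    (hπ0 : 0 < v (π 0)) (hπ1 : v (π 0) < 1)
    (hπp : ∀ n, (π (n + 1)) ^ p = π n)
    (hπm : ∀ x : K, v x < 1 ↔ ∃ n, ∃ a : K, v a ≤ 1 ∧ x = π n * a) :
    ∀ (E : Type*) [AddCommGroup E] [Module v.integer E]
      (i : maxIdealSubmodule v →ₗ[v.integer] E)
      (π' : E →ₗ[v.integer] maxIdealSubmodule v),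
      Function.Injective i → Function.Surjective π' →
      LinearMap.range i = LinearMap.ker π' →
      ∃ s : maxIdealSubmodule v →ₗ[v.integer] E, π' ∘ₗ s = LinearMap.id := by
  intro E _ _ i π' hi hsurj hrange
  classical
  -- basic valuation facts
  have hppos : 0 < p := hp.pos
  have hπpow : ∀ n, v (π (n+1)) ^ p = v (π n) := by
    intro n; rw [← map_pow, hπp]
  have hπpos : ∀ n, 0 < v (π n) := by
    intro n; induction n with
    | zero => exact hπ0
    | succ n ih =>
      by_contra h0
      push_neg at h0
      have hz : v (π (n+1)) = 0 := le_antisymm h0 zero_le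
      have := hπpow n
      rw [hz, zero_pow hp.ne_zero] at this
      exact (ne_of_gt ih) this.symm
  have hπlt : ∀ n, v (π n) < 1 := by
    intro n; induction n with
    | zero => exact hπ1
    | succ n ih =>
      by_contra h0
      push_neg at h0
      have : (1 : NNReal) ≤ v (π (n+1)) ^ p := one_le_pow₀ h0
      rw [hπpow n] at this
      exact absurd ih (not_lt.mpr this)
  have hπne : ∀ n, π n ≠ 0 := by
    intro n h
    have := hπpos n
    rw [h, map_zero] at this
    exact lt_irrefl _ this
  -- the transition elements t n = π (n+1) ^ (p - 1)
  set t : ℕ → K := fun n => π (n+1) ^ (p - 1) with ht_def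
  have ht_mul : ∀ n, t n * π (n+1) = π n := by
    intro n
    have : t n * π (n+1) = π (n+1) ^ (p - 1 + 1) := by rw [pow_succ]
    rw [this, Nat.sub_add_cancel hp.one_lt.le]
    exact hπp n
  have htlt : ∀ n, v (t n) < 1 := by
    intro n
    have : v (t n) = v (π (n+1)) ^ (p - 1) := map_pow v _ _
    rw [this]
    exact pow_lt_one₀ zero_le (hπlt _) (Nat.sub_ne_zero_of_lt hp.one_lt)
  have htpos : ∀ n, 0 < v (t n) := by
    intro n
    have : v (t n) = v (π (n+1)) ^ (p - 1) := map_pow v _ _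
    rw [this]
    exact pow_pos (hπpos _) _
  have htne : ∀ n, t n ≠ 0 := by
    intro n h
    have := htpos n
    rw [h, map_zero] at this
    exact lt_irrefl _ this
  -- choose lifts of the π n
  have he : ∀ n, ∃ en : E, π' en = ⟨π n, hπlt n⟩ := fun n => hsurj _
  choose e he using he
  -- the defects m n
  have hm : ∀ n, ∃ z : maxIdealSubmodule v,
      i z = (⟨t n, (htlt n).le⟩ : v.integer) • e (n+1) - e n := by
    intro n
    have hker : ((⟨t n, (htlt n).le⟩ : v.integer) • e (n+1) - e n) ∈ LinearMap.ker π' := by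
      rw [LinearMap.mem_ker, map_sub, map_smul, he, he]
      have : (⟨t n, (htlt n).le⟩ : v.integer) • (⟨π (n+1), hπlt (n+1)⟩ : maxIdealSubmodule v)
          = (⟨π n, hπlt n⟩ : maxIdealSubmodule v) := by
        apply Subtype.ext
        show t n * π (n+1) = π n
        exact ht_mul n
      rw [this, sub_self]
    rw [← hrange] at hker
    obtain ⟨z, hz⟩ := hker
    exact ⟨z, hz⟩
  choose m hmeq using hm
  -- partial products and sums
  set T : ℕ → K := fun n => ∏ j ∈ Finset.range n, t j with hT_def
  have hTsucc : ∀ n, T (n+1) = T n * t n := fun n => Finset.prod_range_succ _ _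
  have hTne : ∀ n, T n ≠ 0 := by
    intro n
    exact Finset.prod_ne_zero_iff.mpr fun j _ => htne j
  have hTpos : ∀ n, 0 < v (T n) := by
    intro n
    exact (Valuation.pos_iff v).mpr (hTne n)
  set C : ℕ → K := fun n => ∑ j ∈ Finset.range n, T j * (m j : K) with hC_def
  have hCsucc : ∀ n, C (n+1) = C n + T n * (m n : K) := fun n => Finset.sum_range_succ _ _
  have hmlt : ∀ n, v ((m n : K)) < 1 := fun n => (m n).2
  -- the chain of balls
  set B : ℕ → Set K := fun n => {x : K | v (x - C (n+1)) ≤ v (T (n+1))} with hB_def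
  have hBsucc : ∀ n, B (n+1) ⊆ B n := by
    intro n x hx
    have h1 : v (x - C (n+2)) ≤ v (T (n+2)) := hx
    have h2 : x - C (n+1) = (x - C (n+2)) + (C (n+2) - C (n+1)) := by ring
    have h3 : C (n+2) - C (n+1) = T (n+1) * (m (n+1) : K) := by rw [hCsucc]; ring
    have h4 : v (x - C (n+1)) ≤ max (v (x - C (n+2))) (v (C (n+2) - C (n+1))) := by
      rw [h2]; exact v.map_add _ _
    have h5 : v (T (n+2)) ≤ v (T (n+1)) := by
      rw [hTsucc (n+1), map_mul]
      exact mul_le_of_le_one_right zero_le (htlt (n+1)).le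
    have h6 : v (C (n+2) - C (n+1)) ≤ v (T (n+1)) := by
      rw [h3, map_mul]
      exact mul_le_of_le_one_right zero_le (hmlt (n+1)).le
    exact le_trans h4 (max_le (le_trans h1 h5) h6)
  have hBanti : Antitone B := antitone_nat_of_succ_le hBsucc
  obtain ⟨y, hy⟩ := hsc (Set.range B)
    (by rintro _ ⟨n, rfl⟩; exact ⟨C (n+1), v (T (n+1)), rfl⟩)
    (by
      rintro _ ⟨n, rfl⟩ _ ⟨k, rfl⟩ _
      rcases le_total n k with h | h
      · exact Or.inr (hBanti h)
      · exact Or.inl (hBanti h))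
  have hy' : ∀ n, v (y - C (n+1)) ≤ v (T (n+1)) := by
    intro n
    exact hy _ ⟨n, rfl⟩
  have hyC : ∀ n, v (y - C n) < v (T n) := by
    intro n
    have h2 : y - C n = (y - C (n+1)) + (C (n+1) - C n) := by ring
    have h4 : v (y - C n) ≤ max (v (y - C (n+1))) (v (C (n+1) - C n)) := by
      rw [h2]; exact v.map_add _ _
    have h5 : v (T (n+1)) < v (T n) := by
      rw [hTsucc n, map_mul]
      exact mul_lt_of_lt_one_right (hTpos n) (htlt n)
    have h6 : v (C (n+1) - C n) < v (T n) := by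
      have h3 : C (n+1) - C n = T n * (m n : K) := by rw [hCsucc]; ring
      rw [h3, map_mul]
      exact mul_lt_of_lt_one_right (hTpos n) (hmlt n)
    exact lt_of_le_of_lt h4 (max_lt (lt_of_le_of_lt (hy' n) h5) h6)
  -- the corrections x n
  set x : ℕ → K := fun n => (y - C n) / T n with hx_def
  have hxlt : ∀ n, v (x n) < 1 := by
    intro n
    have : v (x n) = v (y - C n) / v (T n) := map_div₀ v _ _
    rw [this, div_lt_one (hTpos n)]
    exact hyC n
  have hxrec : ∀ n, x n = (m n : K) + t n * x (n+1) := by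
    intro n
    have h1 : T n ≠ 0 := hTne n
    have h2 : T (n+1) ≠ 0 := hTne (n+1)
    show (y - C n) / T n = (m n : K) + t n * ((y - C (n+1)) / T (n+1))
    have h3 : y - C n = (y - C (n+1)) + T n * (m n : K) := by rw [hCsucc]; ring
    rw [hTsucc n, h3, aux_div_split _ _ _ _ (htne n) (hTne n)]
  -- the compatible system f n
  set f : ℕ → E := fun n => e n + i ⟨x n, hxlt n⟩ with hf_def
  have hiker : ∀ z : maxIdealSubmodule v, π' (i z) = 0 := by
    intro z
    have : i z ∈ LinearMap.ker π' := hrange ▸ LinearMap.mem_range_self i z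
    exact this
  have hfπ : ∀ n, π' (f n) = ⟨π n, hπlt n⟩ := by
    intro n
    show π' (e n + i ⟨x n, hxlt n⟩) = _
    rw [map_add, he, hiker, add_zero]
  have hfstep : ∀ n, (⟨t n, (htlt n).le⟩ : v.integer) • f (n+1) = f n := by
    intro n
    show (⟨t n, (htlt n).le⟩ : v.integer) • (e (n+1) + i ⟨x (n+1), hxlt (n+1)⟩)
        = e n + i ⟨x n, hxlt n⟩
    rw [smul_add]
    have h1 : (⟨t n, (htlt n).le⟩ : v.integer) • e (n+1) = e n + i (m n) := by
      rw [hmeq n]; abel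
    rw [h1]
    have h2 : m n + (⟨t n, (htlt n).le⟩ : v.integer) • (⟨x (n+1), hxlt (n+1)⟩ : maxIdealSubmodule v)
        = ⟨x n, hxlt n⟩ := by
      apply Subtype.ext
      show (m n : K) + t n * x (n+1) = x n
      exact (hxrec n).symm
    calc e n + i (m n) + (⟨t n, (htlt n).le⟩ : v.integer) • i ⟨x (n+1), hxlt (n+1)⟩
        = e n + (i (m n) + i ((⟨t n, (htlt n).le⟩ : v.integer) • ⟨x (n+1), hxlt (n+1)⟩)) := by
          rw [map_smul]
          abel
      _ = e n + i (m n + (⟨t n, (htlt n).le⟩ : v.integer) • ⟨x (n+1), hxlt (n+1)⟩) := by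
          rw [map_add]
      _ = e n + i ⟨x n, hxlt n⟩ := by rw [h2]
  -- transport along products of t
  have hPle : ∀ n k, v (∏ j ∈ Finset.Ico n (n+k), t j) ≤ 1 := by
    intro n k
    rw [map_prod]
    exact Finset.prod_le_one (fun j _ => zero_le) (fun j _ => (htlt j).le)
  have hπt : ∀ n k, π n = (∏ j ∈ Finset.Ico n (n+k), t j) * π (n+k) := by
    intro n k
    induction k with
    | zero => simp
    | succ k ih =>
      rw [ih, ← ht_mul (n+k), show n + (k+1) = (n+k) + 1 from rfl,
        Finset.prod_Ico_succ_top (Nat.le_add_right n k)]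
      ring
  have hft : ∀ n k, f n = (⟨∏ j ∈ Finset.Ico n (n+k), t j, hPle n k⟩ : v.integer) • f (n+k) := by
    intro n k
    induction k with
    | zero =>
      have : (⟨∏ j ∈ Finset.Ico n (n+0), t j, hPle n 0⟩ : v.integer) = 1 := by
        apply Subtype.ext; simp
      rw [this, one_smul]
      rfl
    | succ k ih =>
      have hsplit : (⟨∏ j ∈ Finset.Ico n (n+(k+1)), t j, hPle n (k+1)⟩ : v.integer)
          = (⟨∏ j ∈ Finset.Ico n (n+k), t j, hPle n k⟩ : v.integer)
            * ⟨t (n+k), (htlt (n+k)).le⟩ := by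
        apply Subtype.ext
        show ∏ j ∈ Finset.Ico n (n+(k+1)), t j = (∏ j ∈ Finset.Ico n (n+k), t j) * t (n+k)
        rw [show n + (k+1) = (n+k) + 1 from rfl, Finset.prod_Ico_succ_top (Nat.le_add_right n k)]
      rw [hsplit, mul_smul, show n + (k+1) = (n+k) + 1 from rfl, hfstep (n+k), ← ih]
  -- key well-definedness lemma
  have hkey : ∀ n nk a b (ha : v a ≤ 1) (hb : v b ≤ 1), n ≤ nk → π n * a = π nk * b →
      (⟨a, ha⟩ : v.integer) • f n = (⟨b, hb⟩ : v.integer) • f nk := by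
    intro n nk a b ha hb hle hab
    obtain ⟨k, rfl⟩ := Nat.exists_eq_add_of_le hle
    have hb' : (∏ j ∈ Finset.Ico n (n+k), t j) * a = b := by
      apply mul_left_cancel₀ (hπne (n+k))
      have : π (n+k) * ((∏ j ∈ Finset.Ico n (n+k), t j) * a)
          = ((∏ j ∈ Finset.Ico n (n+k), t j) * π (n+k)) * a := by ring
      rw [this, ← hπt n k, hab]
    rw [hft n k, smul_smul]
    congr 1
    apply Subtype.ext
    show a * ∏ j ∈ Finset.Ico n (n+k), t j = b
    rw [mul_comm]; exact hb'
  have hkey2 : ∀ n nk a b (ha : v a ≤ 1) (hb : v b ≤ 1), π n * a = π nk * b →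
      (⟨a, ha⟩ : v.integer) • f n = (⟨b, hb⟩ : v.integer) • f nk := by
    intro n nk a b ha hb hab
    rcases le_total n nk with h | h
    · exact hkey n nk a b ha hb h hab
    · exact (hkey nk n b a hb ha h hab.symm).symm
  -- representations of elements of the maximal ideal
  have hrep : ∀ z : maxIdealSubmodule v, ∃ n, ∃ a : K, v a ≤ 1 ∧ (z : K) = π n * a :=
    fun z => (hπm (z : K)).mp z.2
  choose N A hA1 hA2 using hrep
  set S : maxIdealSubmodule v → E := fun z => (⟨A z, hA1 z⟩ : v.integer) • f (N z) with hS_def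
  have hSspec : ∀ (z : maxIdealSubmodule v) n a (ha : v a ≤ 1), (z : K) = π n * a →
      S z = (⟨a, ha⟩ : v.integer) • f n := by
    intro z n a ha h
    exact hkey2 (N z) n (A z) a (hA1 z) ha (by rw [← hA2 z, h])
  -- lifting representations to a common level
  have hlift : ∀ j n (a : K), j ≤ n → v a ≤ 1 →
      ∃ a' : K, v a' ≤ 1 ∧ π j * a = π n * a' := by
    intro j n a hle ha
    obtain ⟨k, rfl⟩ := Nat.exists_eq_add_of_le hle
    refine ⟨(∏ i ∈ Finset.Ico j (j+k), t i) * a, ?_, ?_⟩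
    · rw [map_mul]
      exact mul_le_one' (hPle j k) ha
    · rw [hπt j k]; ring
  have hcommon : ∀ z w : maxIdealSubmodule v, ∃ n, ∃ a b : K,
      v a ≤ 1 ∧ v b ≤ 1 ∧ (z : K) = π n * a ∧ (w : K) = π n * b := by
    intro z w
    rcases le_total (N z) (N w) with h | h
    · obtain ⟨a', ha', heq⟩ := hlift (N z) (N w) (A z) h (hA1 z)
      exact ⟨N w, a', A w, ha', hA1 w, by rw [hA2 z, heq], hA2 w⟩
    · obtain ⟨b', hb', heq⟩ := hlift (N w) (N z) (A w) h (hA1 w)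
      exact ⟨N z, A z, b', hA1 z, hb', hA2 z, by rw [hA2 w, heq]⟩
  -- S is additive
  have hSadd : ∀ z w : maxIdealSubmodule v, S (z + w) = S z + S w := by
    intro z w
    obtain ⟨n, a, b, ha, hb, hza, hwb⟩ := hcommon z w
    have hab : v (a + b) ≤ 1 := le_trans (v.map_add a b) (max_le ha hb)
    have hzw : ((z + w : maxIdealSubmodule v) : K) = π n * (a + b) := by
      push_cast [hza, hwb]; ring
    rw [hSspec (z + w) n (a + b) hab hzw, hSspec z n a ha hza, hSspec w n b hb hwb]
    have : (⟨a + b, hab⟩ : v.integer) = ⟨a, ha⟩ + ⟨b, hb⟩ := rfl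
    rw [this, add_smul]
  -- S is linear over scalars
  have hSsmul : ∀ (c : v.integer) (z : maxIdealSubmodule v), S (c • z) = c • S z := by
    intro c z
    have hca : v ((c : K) * A z) ≤ 1 := by
      rw [map_mul]
      exact mul_le_one' c.2 (hA1 z)
    have hcz : ((c • z : maxIdealSubmodule v) : K) = π (N z) * ((c : K) * A z) := by
      have : ((c • z : maxIdealSubmodule v) : K) = (c : K) * (z : K) := rfl
      rw [this, hA2 z]; ring
    rw [hSspec (c • z) (N z) ((c : K) * A z) hca hcz]
    have : (⟨(c : K) * A z, hca⟩ : v.integer) = c * ⟨A z, hA1 z⟩ := rfl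
    rw [this, mul_smul]
  refine ⟨{ toFun := S, map_add' := hSadd, map_smul' := hSsmul }, ?_⟩
  apply LinearMap.ext
  intro z
  show π' (S z) = z
  rw [hS_def]
  simp only
  rw [map_smul, hfπ]
  apply Subtype.ext
  show (A z) * π (N z) = (z : K)
  rw [hA2 z]; ring
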